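/- The operation cl_S defined by u ∈ N^{cl_S}_M iff for all s ∈ S, s ⊗ u ∈ im(S ⊗ N → S ⊗ M), is a closure operation: it satisfies extension (N ⊆ N^{cl_S}_M), idempotence ((N^{cl_S}_M)^{cl_S}_M = N^{cl_S}_M), and order-preservation (N ⊆ N' implies N^{cl_S}_M ⊆ N'^{cl_S}_M). -/

import Mathlib

open TensorProduct

variable {R S M : Type*} [CommRing R] [AddCommGroup S] [Module R S]
  [AddCommGroup M] [Module R M]

/-- The module closure `cl_S`: `u ∈ N^{cl_S}_M` iff for all `s ∈ S`,
`s ⊗ u ∈ im (S ⊗ N → S ⊗ M)`. -/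
def modClosure (S : Type*) [AddCommGroup S] [Module R S] (N : Submodule R M) :
    Submodule R M where
  carrier := {u : M | ∀ s : S,
    s ⊗ₜ[R] u ∈ LinearMap.range (LinearMap.lTensor S N.subtype)}
  zero_mem' := fun s => by
    rw [tmul_zero]; exact zero_mem _
  add_mem' := fun {a b} ha hb s => by
    rw [tmul_add]; exact add_mem (ha s) (hb s)
  smul_mem' := fun r u hu s => by
    rw [tmul_smul]; exact Submodule.smul_mem _ r (hu s)

/-- `cl_S` is a closure operation: extension, idempotence, and
order-preservation. -/
theorem stmt1 [IsNoetherianRing R] [Module.Finite R M] :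
    (∀ N : Submodule R M, N ≤ modClosure S N) ∧
    (∀ N : Submodule R M, modClosure S (modClosure S N) = modClosure S N) ∧
    (∀ N N' : Submodule R M, N ≤ N' → modClosure S N ≤ modClosure S N') := by
  have ext : ∀ N : Submodule R M, N ≤ modClosure S N := by
    intro N u hu s
    exact ⟨s ⊗ₜ[R] (⟨u, hu⟩ : N), rfl⟩
  have mono : ∀ N N' : Submodule R M, N ≤ N' → modClosure S N ≤ modClosure S N' := by
    intro N N' h u hu s
    obtain ⟨x, hx⟩ := hu s
    refine ⟨LinearMap.lTensor S (Submodule.inclusion h) x, ?_⟩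
    rw [← LinearMap.comp_apply, ← LinearMap.lTensor_comp]
    simpa [Submodule.subtype_comp_inclusion] using hx
  refine ⟨ext, fun N => le_antisymm ?_ (ext (modClosure S N)), mono⟩
  intro u hu s
  obtain ⟨x, hx⟩ := hu s
  rw [← hx]
  have : ∀ x : S ⊗[R] (modClosure S N),
      LinearMap.lTensor S (modClosure S N).subtype x ∈
        LinearMap.range (LinearMap.lTensor S N.subtype) := by
    intro x
    induction x using TensorProduct.induction_on with
    | zero => simp
    | tmul t v => exact v.2 t
    | add a b ha hb => rw [map_add]; exact add_mem ha hb
  exact this x
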